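/- Let H and K be complex Hilbert spaces, let A, B : H → K be bounded linear operators, and let e_A denote the orthogonal projection of K onto the closure of the range of A. Suppose C : H → H is a nonzero bounded operator with dense range, and suppose the linear map Ψ defined on the subspace {A* ∘ x ∘ C : x ∈ B(K)} of B(H) by Ψ(A* ∘ x ∘ C) = B* ∘ x ∘ C is well defined and closable with respect to the weak operator topology. Then the closure of the range of B is contained in the closure of the range of A. -/

import Mathlib

open ContinuousLinearMap Filter Topology

/-- If the map `Ψ (A* ∘ x ∘ C) = B* ∘ x ∘ C` (with `C` nonzero of dense range)
is well defined and closable in the weak operator topology, then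
`closure (range B) ⊆ closure (range A)`. -/
theorem stmt0
    {H K : Type*} [NormedAddCommGroup H] [InnerProductSpace ℂ H] [CompleteSpace H]
    [NormedAddCommGroup K] [InnerProductSpace ℂ K] [CompleteSpace K]
    (A B : H →L[ℂ] K) (C : H →L[ℂ] K)
    (hC0 : C ≠ 0) (hCdense : DenseRange C)
    (hwd : ∀ x x' : K →L[ℂ] K,
      (adjoint A) ∘L x ∘L C = (adjoint A) ∘L x' ∘L C →
      (adjoint B) ∘L x ∘L C = (adjoint B) ∘L x' ∘L C)
    (hclosable : ∀ (x : ℕ → K →L[ℂ] K) (y : H →L[ℂ] H),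
      (∀ ξ η : H, Tendsto (fun n => (inner ℂ (((adjoint A) ∘L x n ∘L C) ξ) η : ℂ))
          atTop (𝓝 0)) →
      (∀ ξ η : H, Tendsto (fun n => (inner ℂ (((adjoint B) ∘L x n ∘L C) ξ) η : ℂ))
          atTop (𝓝 (inner ℂ (y ξ) η))) →
      y = 0) :
    (LinearMap.range (B : H →ₗ[ℂ] K)).topologicalClosure ≤ (LinearMap.range (A : H →ₗ[ℂ] K)).topologicalClosure := by
  set S := (LinearMap.range (A : H →ₗ[ℂ] K)).topologicalClosure with hS
  have hSclosed : IsClosed (S : Set K) := Submodule.isClosed_topologicalClosure _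
  haveI : CompleteSpace S := hSclosed.completeSpace_coe
  set P : K →L[ℂ] K := S.subtypeL ∘L S.orthogonalProjectionOnto with hP
  set Q : K →L[ℂ] K := 1 - P with hQ
  have hQsa : IsSelfAdjoint Q := by
    simp only [hQ, IsSelfAdjoint, star_sub, star_one]
    exact congrArg (1 - ·) (isSelfAdjoint_starProjection S).star_eq
  have hQA : Q ∘L A = 0 := by
    ext h
    have hmem : A h ∈ S := Submodule.le_topologicalClosure _ ⟨h, rfl⟩
    simp [hQ, hP, Submodule.starProjection_eq_self_iff.mpr hmem]
  have hAQ : adjoint A ∘L Q = 0 := by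
    calc adjoint A ∘L Q = adjoint A ∘L adjoint Q := by rw [hQsa.adjoint_eq]
      _ = adjoint (Q ∘L A) := (adjoint_comp Q A).symm
      _ = 0 := by rw [hQA, map_zero]
  have hkey : adjoint B ∘L Q ∘L C = 0 := by
    have h0 : adjoint A ∘L Q ∘L C = adjoint A ∘L (0 : K →L[ℂ] K) ∘L C := by
      rw [← comp_assoc, hAQ]; simp
    have := hwd Q 0 h0
    simpa using this
  have hBQ : adjoint B ∘L Q = 0 := by
    refine ContinuousLinearMap.ext_on
      (Dense.mono Submodule.subset_span hCdense) ?_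
    rintro _ ⟨h, rfl⟩
    simpa using ContinuousLinearMap.ext_iff.mp hkey h
  have hQB : Q ∘L B = 0 := by
    calc Q ∘L B = adjoint Q ∘L adjoint (adjoint B) := by
          rw [hQsa.adjoint_eq, adjoint_adjoint]
      _ = adjoint (adjoint B ∘L Q) := (adjoint_comp _ _).symm
      _ = 0 := by rw [hBQ, map_zero]
  have hrange : LinearMap.range (B : H →ₗ[ℂ] K) ≤ S := by
    rintro k ⟨h, rfl⟩
    have hQ0 : B h - P (B h) = 0 := by
      simpa [hQ] using ContinuousLinearMap.ext_iff.mp hQB h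
    have hPB : P (B h) = B h := (sub_eq_zero.mp hQ0).symm
    exact Submodule.starProjection_eq_self_iff.mp hPB
  exact Submodule.topologicalClosure_minimal _ hrange hSclosed
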